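/- If V : ℝⁿ → ℝ is continuous and V(x) ≥ C|x|^N for all |x| ≥ R (some constants C > 0, R > 0, N > 0), then there exist C' > 0 and R' > 0 such that V^ave(z) ≥ C'|z|^N for all z ∈ ℂⁿ with |z| ≥ R'. -/

import Mathlib

open scoped Real

/-- The harmonic-oscillator average of `V : ℝⁿ → ℝ` in complex phase-space
coordinates `z = x + ip`. -/
noncomputable def ave (n : ℕ) (V : (Fin n → ℝ) → ℝ) (z : Fin n → ℂ) : ℝ :=
  (1 / (2 * Real.pi)) *
    ∫ t in (0:ℝ)..(2 * Real.pi), V (fun j => (Complex.exp (Complex.I * t) * z j).re)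

namespace AveAux

noncomputable def fN (N : ℝ) (u : ℝ) : ℝ := (1 + Real.cos u) ^ (N / 2)

lemma fN_cont (N : ℝ) (hN : 0 < N) : Continuous (fN N) := by
  have h : Continuous (fun x : ℝ => x ^ (N/2)) :=
    continuous_iff_continuousAt.mpr fun x =>
      Real.continuousAt_rpow_const x (N/2) (Or.inr (by positivity))
  exact h.comp (by continuity)

lemma fN_nonneg (N u : ℝ) : 0 ≤ fN N u :=
  Real.rpow_nonneg (by nlinarith [Real.neg_one_le_cos u]) _

lemma fN_periodic (N : ℝ) : Function.Periodic (fN N) (2 * Real.pi) := fun x => by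
  simp [fN, Real.cos_add_two_pi]

lemma cN_pos (N : ℝ) (hN : 0 < N) : 0 < ∫ u in (0:ℝ)..(2*Real.pi), fN N u := by
  have hint : ∀ a b : ℝ, IntervalIntegrable (fN N) MeasureTheory.volume a b :=
    fun a b => (fN_cont N hN).intervalIntegrable a b
  have hsplit := intervalIntegral.integral_add_adjacent_intervals (a := 0) (b := Real.pi)
    (c := 2*Real.pi) (hint 0 Real.pi) (hint Real.pi (2*Real.pi))
  rw [← hsplit]
  have h1 : 0 < ∫ u in (0:ℝ)..Real.pi, fN N u := by
    apply intervalIntegral.intervalIntegral_pos_of_pos_on (hint 0 Real.pi)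
    · intro x hx
      apply Real.rpow_pos_of_pos
      have h := Real.cos_lt_cos_of_nonneg_of_le_pi hx.1.le le_rfl hx.2
      rw [Real.cos_pi] at h
      linarith
    · exact Real.pi_pos
  have h2 : 0 ≤ ∫ u in Real.pi..(2*Real.pi), fN N u :=
    intervalIntegral.integral_nonneg (by nlinarith [Real.pi_pos]) (fun u _ => fN_nonneg N u)
  linarith

lemma integral_fN_shift (N : ℝ) (hN : 0 < N) (φ : ℝ) :
    ∫ t in (0:ℝ)..(2*Real.pi), fN N (2*t + φ) = ∫ u in (0:ℝ)..(2*Real.pi), fN N u := by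
  have hint : ∀ a b : ℝ, IntervalIntegrable (fN N) MeasureTheory.volume a b :=
    fun a b => (fN_cont N hN).intervalIntegrable a b
  rw [intervalIntegral.integral_comp_mul_add (fN N) (two_ne_zero) φ]
  have h4 : 2 * (2*Real.pi) + φ = φ + (2:ℤ) • (2*Real.pi) := by
    rw [zsmul_eq_mul]; push_cast; ring
  rw [mul_zero, zero_add, h4, (fN_periodic N).intervalIntegral_add_zsmul_eq 2 φ hint,
    (fN_periodic N).intervalIntegral_add_eq φ 0, zero_add]
  rw [zsmul_eq_mul, smul_eq_mul]
  push_cast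
  ring

lemma re_sq (w : ℂ) : w.re ^ 2 = (‖w‖ ^ 2 + (w ^ 2).re) / 2 := by
  rw [Complex.sq_norm, Complex.normSq_apply]
  simp [pow_two, Complex.mul_re]

lemma exp_re_cos (S : ℂ) (t : ℝ) :
    (Complex.exp (Complex.I * (2 * t)) * S).re = ‖S‖ * Real.cos (2 * t + S.arg) := by
  conv_lhs => rw [← Complex.norm_mul_exp_arg_mul_I S]
  rw [← mul_assoc, mul_comm (Complex.exp _), mul_assoc, ← Complex.exp_add]
  have h : Complex.I * (2 * t) + S.arg * Complex.I = (((2 * t + S.arg : ℝ)) : ℂ) * Complex.I := by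
    push_cast; ring
  rw [h, Complex.mul_re, Complex.exp_ofReal_mul_I_re]
  simp

lemma sum_re_sq (n : ℕ) (z : Fin n → ℂ) (t : ℝ) :
    ∑ j, ((Complex.exp (Complex.I * t) * z j).re) ^ 2
      = ((∑ j, ‖z j‖ ^ 2)
          + (Complex.exp (Complex.I * (2*t)) * ∑ j, (z j)^2).re) / 2 := by
  rw [Finset.mul_sum, Complex.re_sum, ← Finset.sum_add_distrib, Finset.sum_div]
  refine Finset.sum_congr rfl fun j _ => ?_
  rw [re_sq]
  congr 2
  · rw [norm_mul]
    have : ‖Complex.exp (Complex.I * t)‖ = 1 := by simp [Complex.norm_exp]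
    rw [this, one_mul]
  · rw [mul_pow]
    congr 1
    rw [sq, ← Complex.exp_add]
    ring_nf

lemma quarter_bound (Q s c : ℝ) (hs0 : 0 ≤ s) (hsQ : s ≤ Q) (hc1 : -1 ≤ c) (hc2 : c ≤ 1) :
    Q / 4 * (1 + c) ≤ (Q + s * c) / 2 := by
  rcases le_or_gt 0 c with h | h
  · nlinarith
  · nlinarith

end AveAux

open AveAux

/-- If `V` is continuous and `V(x) ≥ C|x|^N` for `|x| ≥ R`, then there are `C' > 0`,
`R' > 0` with `V^ave(z) ≥ C'|z|^N` for `|z| ≥ R'`. -/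
theorem average_lower_bound (n : ℕ) (V : (Fin n → ℝ) → ℝ) (hV : Continuous V)
    (C R N : ℝ) (hC : 0 < C) (hR : 0 < R) (hN : 0 < N)
    (hlow : ∀ x : Fin n → ℝ, R ≤ Real.sqrt (∑ j, x j ^ 2) →
      C * (Real.sqrt (∑ j, x j ^ 2)) ^ N ≤ V x) :
    ∃ C' > (0:ℝ), ∃ R' > (0:ℝ), ∀ z : Fin n → ℂ,
      R' ≤ Real.sqrt (∑ j, ‖z j‖ ^ 2) →
      C' * (Real.sqrt (∑ j, ‖z j‖ ^ 2)) ^ N ≤ ave n V z := by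
  set cN : ℝ := ∫ u in (0:ℝ)..(2*Real.pi), fN N u with hcNdef
  have hcN : 0 < cN := cN_pos N hN
  -- minimum of V on the compact ball
  have hcomp : IsCompact {x : Fin n → ℝ | ∑ j, x j ^ 2 ≤ R ^ 2} := by
    apply Metric.isCompact_of_isClosed_isBounded
    · exact isClosed_le (by fun_prop) continuous_const
    · apply Bornology.IsBounded.subset (Metric.isBounded_closedBall (x := (0 : Fin n → ℝ)) (r := R))
      intro x hx
      simp only [Metric.mem_closedBall, dist_zero_right]
      apply pi_norm_le_iff_of_nonneg hR.le |>.mpr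
      intro j
      have h1 : x j ^ 2 ≤ R ^ 2 := by
        have := Finset.single_le_sum (f := fun j => x j ^ 2) (fun i _ => sq_nonneg (x i))
          (Finset.mem_univ j)
        exact this.trans hx
      calc ‖x j‖ = |x j| := rfl
        _ = Real.sqrt ((x j) ^ 2) := (Real.sqrt_sq_eq_abs _).symm
        _ ≤ Real.sqrt (R ^ 2) := Real.sqrt_le_sqrt h1
        _ = R := Real.sqrt_sq hR.le
  obtain ⟨x₀, _, hmin'⟩ := hcomp.exists_isMinOn ⟨0, by simp; positivity⟩ hV.continuousOn
  have hmin : ∀ x ∈ {x : Fin n → ℝ | ∑ j, x j ^ 2 ≤ R ^ 2}, V x₀ ≤ V x := fun x hx => hmin' hx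
  set m : ℝ := V x₀ with hmdef
  set K : ℝ := C * R ^ N + |m| with hKdef
  clear_value cN m K
  have hK0 : 0 ≤ K := by
    have : 0 < C * R ^ N := by positivity
    have := abs_nonneg m
    linarith
  -- global lower bound for V
  have hglob : ∀ x : Fin n → ℝ, C * (Real.sqrt (∑ j, x j ^ 2)) ^ N - K ≤ V x := by
    intro x
    rcases le_or_gt R (Real.sqrt (∑ j, x j ^ 2)) with h | h
    · have := hlow x h
      linarith
    · have hx : x ∈ {x : Fin n → ℝ | ∑ j, x j ^ 2 ≤ R ^ 2} := by
        have h0 : (0:ℝ) ≤ ∑ j, x j ^ 2 := Finset.sum_nonneg fun i _ => sq_nonneg _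
        have := Real.sq_sqrt h0
        have hsq : Real.sqrt (∑ j, x j ^ 2) ^ 2 ≤ R ^ 2 := by
          apply pow_le_pow_left₀ (Real.sqrt_nonneg _) h.le
        simpa [this] using hsq
      have h1 : m ≤ V x := hmin x hx
      have h2 : C * (Real.sqrt (∑ j, x j ^ 2)) ^ N ≤ C * R ^ N := by
        apply mul_le_mul_of_nonneg_left _ hC.le
        exact Real.rpow_le_rpow (Real.sqrt_nonneg _) h.le hN.le
      have h3 : -|m| ≤ m := neg_abs_le m
      linarith
  -- constants
  have h2N : (0:ℝ) < (2:ℝ) ^ N := Real.rpow_pos_of_pos (by norm_num) N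
  set C₀ : ℝ := C * cN / (2 * Real.pi * 2 ^ N) with hC₀def
  have hC₀ : 0 < C₀ := by
    apply div_pos (by positivity)
    have := Real.pi_pos
    positivity
  set C' : ℝ := C₀ / 2 with hC'def
  have hC' : 0 < C' := by positivity
  set R' : ℝ := (K / C' + 1) ^ (1 / N) with hR'def
  clear_value C₀ C' R'
  have hKC' : 0 < K / C' + 1 := by positivity
  have hR'0 : (0:ℝ) < R' := by rw [hR'def]; exact Real.rpow_pos_of_pos hKC' _
  refine ⟨C', hC', R', hR'0, fun z hz => ?_⟩
  set Q : ℝ := ∑ j, ‖z j‖ ^ 2 with hQdef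
  have hQ0 : 0 ≤ Q := Finset.sum_nonneg fun i _ => sq_nonneg _
  set s : ℝ := Real.sqrt Q with hsdef
  have hs0 : 0 ≤ s := Real.sqrt_nonneg _
  have hsQ : s ^ 2 = Q := Real.sq_sqrt hQ0
  set S : ℂ := ∑ j, (z j) ^ 2 with hSdef
  set φ : ℝ := S.arg with hφdef
  clear_value Q s S φ
  -- |S| ≤ Q
  have habsS : ‖S‖ ≤ Q := by
    rw [hSdef, hQdef]
    calc ‖∑ j, (z j) ^ 2‖ ≤ ∑ j, ‖(z j) ^ 2‖ :=
          norm_sum_le _ _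
      _ = ∑ j, ‖z j‖ ^ 2 := by simp [norm_pow]
  -- pointwise bound
  have key : ∀ t : ℝ, C * ((Q/4) ^ (N/2) * fN N (2*t + φ)) - K ≤
      V (fun j => (Complex.exp (Complex.I * t) * z j).re) := by
    intro t
    have hsum := sum_re_sq n z t
    have hre := exp_re_cos S t
    have hcos1 := Real.neg_one_le_cos (2*t + φ)
    have hcos2 := Real.cos_le_one (2*t + φ)
    have h1 : Q/4 * (1 + Real.cos (2*t + φ)) ≤
        ∑ j, ((Complex.exp (Complex.I * t) * z j).re) ^ 2 := by
      rw [hsum, ← hSdef, hre, ← hQdef, ← hφdef]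
      exact quarter_bound Q ‖S‖ _ (norm_nonneg S) habsS hcos1 hcos2
    have hw0 : (0:ℝ) ≤ ∑ j, ((Complex.exp (Complex.I * t) * z j).re) ^ 2 :=
      Finset.sum_nonneg fun i _ => sq_nonneg _
    set W : ℝ := ∑ j, ((Complex.exp (Complex.I * t) * z j).re) ^ 2 with hWdef
    clear_value W
    have hQ4 : (0:ℝ) ≤ Q/4 := by linarith
    have hcos0 : (0:ℝ) ≤ 1 + Real.cos (2*t + φ) := by linarith
    have hN2 : (0:ℝ) ≤ N/2 := by linarith
    have h2 : (Q/4) ^ (N/2) * fN N (2*t + φ) ≤ (Real.sqrt W) ^ N := by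
      have e1 : (Q/4) ^ (N/2) * fN N (2*t + φ)
          = (Q/4 * (1 + Real.cos (2*t + φ))) ^ (N/2) :=
        (Real.mul_rpow hQ4 hcos0).symm
      have e2 : (Real.sqrt W) ^ N = W ^ (N/2) := by
        rw [Real.sqrt_eq_rpow, ← Real.rpow_mul hw0]
        congr 1
        ring
      rw [e1, e2]
      exact Real.rpow_le_rpow (mul_nonneg hQ4 hcos0) h1 hN2
    have h3 := hglob (fun j => (Complex.exp (Complex.I * t) * z j).re)
    rw [← hWdef] at h3
    have h4 : C * ((Q/4) ^ (N/2) * fN N (2*t + φ)) ≤ C * (Real.sqrt W) ^ N :=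
      mul_le_mul_of_nonneg_left h2 hC.le
    linarith
  -- integrability
  have hxcont : Continuous fun t : ℝ => (fun j => (Complex.exp (Complex.I * t) * z j).re) := by
    apply continuous_pi
    intro j
    exact Complex.continuous_re.comp ((Complex.continuous_exp.comp
      (continuous_const.mul Complex.continuous_ofReal)).mul continuous_const)
  have hVint : IntervalIntegrable
      (fun t : ℝ => V (fun j => (Complex.exp (Complex.I * t) * z j).re))
      MeasureTheory.volume 0 (2*Real.pi) := (hV.comp hxcont).intervalIntegrable _ _
  have hgcont : Continuous fun t : ℝ => C * ((Q/4) ^ (N/2) * fN N (2*t + φ)) - K := by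
    exact (continuous_const.mul (continuous_const.mul ((fN_cont N hN).comp
      ((continuous_const.mul continuous_id).add continuous_const)))).sub continuous_const
  have hgint := hgcont.intervalIntegrable (μ := MeasureTheory.volume) 0 (2*Real.pi)
  -- integral comparison
  have hmono : (∫ t in (0:ℝ)..(2*Real.pi), (C * ((Q/4) ^ (N/2) * fN N (2*t + φ)) - K))
      ≤ ∫ t in (0:ℝ)..(2*Real.pi), V (fun j => (Complex.exp (Complex.I * t) * z j).re) :=
    intervalIntegral.integral_mono_on (by positivity) hgint hVint (fun t _ => key t)
  -- compute the lower integral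
  have hfshift := integral_fN_shift N hN φ
  have hcalc : (∫ t in (0:ℝ)..(2*Real.pi), (C * ((Q/4) ^ (N/2) * fN N (2*t + φ)) - K))
      = C * (Q/4) ^ (N/2) * cN - 2 * Real.pi * K := by
    have hint1 : IntervalIntegrable (fun t : ℝ => C * ((Q/4) ^ (N/2) * fN N (2*t + φ)))
        MeasureTheory.volume 0 (2*Real.pi) := by
      have := (fN_cont N hN).comp (continuous_const.mul continuous_id |>.add continuous_const
        : Continuous fun t : ℝ => 2*t + φ)
      exact (continuous_const.mul (continuous_const.mul this)).intervalIntegrable _ _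
    rw [intervalIntegral.integral_sub hint1 (intervalIntegrable_const)]
    rw [intervalIntegral.integral_const]
    have : (∫ t in (0:ℝ)..(2*Real.pi), C * ((Q/4) ^ (N/2) * fN N (2*t + φ)))
        = C * (Q/4) ^ (N/2) * ∫ t in (0:ℝ)..(2*Real.pi), fN N (2*t + φ) := by
      rw [← intervalIntegral.integral_const_mul]
      congr 1; funext t; ring
    rw [this, hfshift, ← hcNdef]
    rw [smul_eq_mul]
    ring
  -- express (Q/4)^(N/2) via s
  have hQq : (Q/4 : ℝ) = (s/2) ^ (2:ℕ) := by
    rw [div_pow, ← hsQ]; norm_num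
  have hpow : (Q/4) ^ (N/2) = s ^ N / 2 ^ N := by
    have hs2 : (0:ℝ) ≤ s/2 := by positivity
    rw [hQq, ← Real.rpow_natCast (s/2) 2, ← Real.rpow_mul hs2]
    rw [show ((2:ℕ):ℝ) * (N/2) = N by push_cast; ring]
    rw [Real.div_rpow hs0 (by norm_num : (0:ℝ) ≤ 2)]
  -- assemble
  have hπ : (0:ℝ) < 2 * Real.pi := by positivity
  have havg : C₀ * s ^ N - K ≤ ave n V z := by
    rw [ave]
    have h5 : (1 / (2*Real.pi)) * (C * (Q/4) ^ (N/2) * cN - 2*Real.pi*K)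
        ≤ (1 / (2*Real.pi)) *
          ∫ t in (0:ℝ)..(2*Real.pi), V (fun j => (Complex.exp (Complex.I * t) * z j).re) := by
      apply mul_le_mul_of_nonneg_left _ (by positivity)
      rw [← hcalc]; exact hmono
    have h6 : (1 / (2*Real.pi)) * (C * (Q/4) ^ (N/2) * cN - 2*Real.pi*K)
        = C₀ * s ^ N - K := by
      rw [hpow, hC₀def]
      field_simp
    rw [h6] at h5
    exact h5
  -- final comparison
  have hsz : R' ≤ s := hz
  have hRN : R' ^ N = K / C' + 1 := by
    rw [hR'def, ← Real.rpow_mul hKC'.le]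
    rw [one_div, inv_mul_cancel₀ hN.ne', Real.rpow_one]
  have hsN : K / C' + 1 ≤ s ^ N := by
    rw [← hRN]
    exact Real.rpow_le_rpow hR'0.le hsz hN.le
  have hKs : K + C' ≤ C' * s ^ N := by
    have := mul_le_mul_of_nonneg_left hsN hC'.le
    have hC'ne : C' ≠ 0 := hC'.ne'
    calc K + C' = C' * (K / C' + 1) := by field_simp
      _ ≤ C' * s ^ N := by exact mul_le_mul_of_nonneg_left hsN hC'.le
  have : C₀ * s ^ N - K = C' * s ^ N + (C' * s ^ N - K) := by
    rw [hC'def]; ring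
  have hfin : C' * s ^ N ≤ C₀ * s ^ N - K := by
    rw [this]
    linarith
  exact hfin.trans havg
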